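/- Let x_1, …, x_m be finitely many vectors of a real inner product space, all of norm r, and all at the same distance ℓ from a vector y (i.e. ‖x_i‖ = r and ‖y − x_i‖ = ℓ for every i). Let x̄ := (1/m) Σ_i x_i. Then (1/m) Σ_{i=1}^m ⟨y − x_i, x_i − x̄⟩ (x_i − x̄) = (1/m) Σ_{i=1}^m ⟨x̄, x_i − x̄⟩ (x_i − x̄). -/

import Mathlib

open scoped RealInnerProductSpace BigOperators

/-- For finitely many vectors `x 1, …, x m` of a real inner product space,
all of norm `r` and all at the same distance `ℓ` from a vector `y`, with barycenter
`x̄ = (1/m) ∑ x i`, one has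
`(1/m) ∑ ⟪y − x i, x i − x̄⟫ (x i − x̄) = (1/m) ∑ ⟪x̄, x i − x̄⟫ (x i − x̄)`. -/
theorem statement7 {E : Type*} [NormedAddCommGroup E] [InnerProductSpace ℝ E]
    (m : ℕ) (x : Fin m → E) (y : E) (r ℓ : ℝ)
    (hxr : ∀ i, ‖x i‖ = r) (hxℓ : ∀ i, ‖y - x i‖ = ℓ)
    (xbar : E) (hxbar : xbar = (m : ℝ)⁻¹ • ∑ i, x i) :
    (m : ℝ)⁻¹ • ∑ i, ⟪y - x i, x i - xbar⟫ • (x i - xbar)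
      = (m : ℝ)⁻¹ • ∑ i, ⟪xbar, x i - xbar⟫ • (x i - xbar) := by
  rcases Nat.eq_zero_or_pos m with hm | hm
  · subst hm; simp
  have hm' : (m : ℝ) ≠ 0 := Nat.cast_ne_zero.mpr hm.ne'
  set c := (‖y‖ ^ 2 + r ^ 2 - ℓ ^ 2) / 2 with hc
  have hyc : ∀ i, ⟪y, x i⟫ = c := by
    intro i
    have h2 : ‖y - x i‖ ^ 2 = ℓ ^ 2 := by rw [hxℓ i]
    rw [norm_sub_sq_real, hxr i] at h2
    rw [hc]; linarith
  have hsum : ∑ i, (x i - xbar) = 0 := by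
    rw [Finset.sum_sub_distrib, Finset.sum_const, Finset.card_univ, Fintype.card_fin,
      hxbar, ← Nat.cast_smul_eq_nsmul ℝ, smul_smul, mul_inv_cancel₀ hm', one_smul,
      sub_self]
  set K : ℝ := c - ⟪y, xbar⟫ + ‖xbar‖ ^ 2 - r ^ 2 with hK
  have key : ∀ i, ⟪y - x i, x i - xbar⟫ • (x i - xbar)
      - ⟪xbar, x i - xbar⟫ • (x i - xbar) = K • (x i - xbar) := by
    intro i
    rw [← sub_smul]
    congr 1
    have hxx : ⟪x i, x i⟫ = r ^ 2 := by
      rw [real_inner_self_eq_norm_sq, hxr i]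
    have hcomm : ⟪x i, xbar⟫ = ⟪xbar, x i⟫ := real_inner_comm _ _
    have hbb : ⟪xbar, xbar⟫ = ‖xbar‖ ^ 2 := real_inner_self_eq_norm_sq _
    simp only [inner_sub_left, inner_sub_right, hyc i, hK]
    linarith
  have : ∑ i, ⟪y - x i, x i - xbar⟫ • (x i - xbar)
      = ∑ i, ⟪xbar, x i - xbar⟫ • (x i - xbar) := by
    rw [← sub_eq_zero, ← Finset.sum_sub_distrib]
    simp only [key]
    rw [← Finset.smul_sum, hsum, smul_zero]
  rw [this]
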